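/- Let m ≥ 1, let A_1, …, A_m ∈ ℱ be events, ℋ_1, …, ℋ_m ⊆ ℱ sub-σ-algebras, σ ∈ (0,1] a constant, Θ a nonempty set, and M : Ω × Θ → ℝ a map such that for every θ ∈ Θ the random variable M(·, θ) is integrable and is ℋ_i-measurable for every i. Set π_i := P[A_i | ℋ_i] and assume π_i ≥ σ almost surely and, for every i, the indicators 1_{A_j} and conditional probabilities π_j for all j > i are ℋ_i-measurable. Then for every θ ∈ Θ, E[∏_{i=1}^m (1_{A_i} / π_i) · M(·, θ)] = E[M(·, θ)]. Consequently, if θ_0 is the unique element of Θ with E[M(·, θ_0)] = 0, then θ_0 is also the unique element of Θ at which the inverse probability weighted moment E[∏_{i=1}^m (1_{A_i} / π_i) · M(·, θ)] vanishes. -/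
import Mathlib


open MeasureTheory

/-- The inverse probability weighted moment condition has the same expectation,
hence the same unique root, as the complete-data moment condition. -/
theorem stmt_11 {Ω : Type*} [m0 : MeasurableSpace Ω]
    (μ : Measure Ω) [IsProbabilityMeasure μ]
    (m : ℕ) (hm : 1 ≤ m)
    (A : Fin m → Set Ω) (hA : ∀ i, MeasurableSet (A i))
    (H : Fin m → MeasurableSpace Ω) (hH : ∀ i, H i ≤ m0)
    (σ : ℝ) (hσ0 : 0 < σ) (hσ1 : σ ≤ 1)
    (Θ : Type*) [Nonempty Θ]
    (M : Ω → Θ → ℝ)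
    (hMint : ∀ θ : Θ, Integrable (fun ω => M ω θ) μ)
    (hMmeas : ∀ (i : Fin m) (θ : Θ), Measurable[H i] (fun ω => M ω θ))
    (π : Fin m → Ω → ℝ)
    (hπ : ∀ i, π i = μ[(A i).indicator (fun _ => (1 : ℝ)) | H i])
    (hbound : ∀ i, ∀ᵐ ω ∂μ, σ ≤ π i ω)
    (hAmeas : ∀ i j : Fin m, i < j → MeasurableSet[H i] (A j))
    (hπmeas : ∀ i j : Fin m, i < j → Measurable[H i] (π j)) :
    (∀ θ : Θ,
      ∫ ω, (∏ i : Fin m, (A i).indicator (fun _ => (1 : ℝ)) ω / π i ω) * M ω θ ∂μ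
        = ∫ ω, M ω θ ∂μ)
    ∧
    (∀ θ0 : Θ,
      ((∫ ω, M ω θ0 ∂μ) = 0 ∧ ∀ θ : Θ, (∫ ω, M ω θ ∂μ) = 0 → θ = θ0) →
      ((∫ ω, (∏ i : Fin m, (A i).indicator (fun _ => (1 : ℝ)) ω / π i ω) * M ω θ0 ∂μ) = 0
        ∧ ∀ θ : Θ,
            (∫ ω, (∏ i : Fin m, (A i).indicator (fun _ => (1 : ℝ)) ω / π i ω) * M ω θ ∂μ) = 0
            → θ = θ0)) := by
  classical
  have key : ∀ θ : Θ,
      ∫ ω, (∏ i : Fin m, (A i).indicator (fun _ => (1 : ℝ)) ω / π i ω) * M ω θ ∂μ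
        = ∫ ω, M ω θ ∂μ := by
    intro θ
    set r : Fin m → Ω → ℝ := fun i ω => (A i).indicator (fun _ => (1 : ℝ)) ω / π i ω with hr
    -- basic measurability facts
    have hπSM : ∀ i, StronglyMeasurable[H i] (π i) := by
      intro i; rw [hπ i]; exact stronglyMeasurable_condExp
    have hπm0 : ∀ i, Measurable (π i) := fun i =>
      ((hπSM i).measurable).mono (hH i) le_rfl
    have hE : ∀ᵐ ω ∂μ, ∀ i, σ ≤ π i ω := (ae_all_iff).2 hbound
    have hind : ∀ (i : Fin m) (ω : Ω), |(A i).indicator (fun _ => (1 : ℝ)) ω| ≤ 1 := by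
      intro i ω; by_cases h : ω ∈ A i <;> simp [Set.indicator_apply, h]
    have hr_bound : ∀ (ω : Ω), (∀ i, σ ≤ π i ω) → ∀ i, |r i ω| ≤ 1 / σ := by
      intro ω hω i
      have hπpos : σ ≤ |π i ω| := le_trans (hω i) (le_abs_self _)
      calc |r i ω| = |(A i).indicator (fun _ => (1 : ℝ)) ω| / |π i ω| := abs_div _ _
        _ ≤ 1 / σ := div_le_div₀ zero_le_one (hind i ω) hσ0 hπpos
    have hprod_bound : ∀ (s : Finset (Fin m)) (ω : Ω), (∀ i, σ ≤ π i ω) →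
        |∏ i ∈ s, r i ω| ≤ (1 / σ) ^ s.card := by
      intro s ω hω
      rw [Finset.abs_prod]
      calc (∏ i ∈ s, |r i ω|) ≤ ∏ i ∈ s, (1 / σ) :=
            Finset.prod_le_prod (fun i _ => abs_nonneg _) (fun i _ => hr_bound ω hω i)
        _ = (1 / σ) ^ s.card := Finset.prod_const _
    have hrm0 : ∀ i, Measurable (r i) := fun i =>
      (measurable_const.indicator (hA i)).div (hπm0 i)
    have integ : ∀ (f : Ω → ℝ) (c : ℝ), AEStronglyMeasurable f μ →
        (∀ᵐ ω ∂μ, ‖f ω‖ ≤ c * ‖M ω θ‖) → Integrable f μ := by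
      intro f c hf hb
      exact Integrable.mono' (((hMint θ).norm).const_mul c) hf hb
    have main : ∀ j : ℕ,
        ∫ ω, (∏ i ∈ Finset.univ.filter (fun i : Fin m => m - j ≤ (i : ℕ)), r i ω) * M ω θ ∂μ
          = ∫ ω, M ω θ ∂μ := by
      intro j
      induction j with
      | zero =>
        have h0 : Finset.univ.filter (fun i : Fin m => m ≤ (i : ℕ)) = ∅ := by
          ext i
          simp only [Finset.mem_filter, Finset.mem_univ, true_and, Finset.notMem_empty,
            iff_false]
          have := i.isLt; omega
        simp only [Nat.sub_zero, h0, Finset.prod_empty, one_mul]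
      | succ j ih =>
        by_cases hjm : m ≤ j
        · have hsame : m - (j + 1) = m - j := by omega
          rw [hsame]; exact ih
        · push_neg at hjm
          set k := m - (j + 1) with hk
          have hkm : k < m := by omega
          have hk1 : k + 1 = m - j := by omega
          rw [← hk1] at ih
          set ι : Fin m := ⟨k, hkm⟩ with hι
          set s : Finset (Fin m) := Finset.univ.filter (fun i : Fin m => k + 1 ≤ (i : ℕ))
            with hs
          have hinsert : Finset.univ.filter (fun i : Fin m => m - (j + 1) ≤ (i : ℕ))
              = insert ι s := by
            ext i
            simp only [hs, Finset.mem_filter, Finset.mem_univ, true_and, Finset.mem_insert,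
              Fin.ext_iff, hι, ← hk]
            omega
          have hιs : ι ∉ s := by simp [hs, hι]
          have hιlt : ∀ i ∈ s, ι < i := by
            intro i hi
            simp only [hs, Finset.mem_filter, Finset.mem_univ, true_and] at hi
            exact Fin.lt_def.2 (by simp [hι]; omega)
          -- the H ι-measurable part
          set g : Ω → ℝ := fun ω => (∏ i ∈ s, r i ω) * M ω θ with hg
          have hgmeas : Measurable[H ι] g := by
            refine Measurable.mul ?_ (hMmeas ι θ)
            refine Finset.measurable_prod s (fun i hi => ?_)
            exact (measurable_const.indicator (hAmeas ι i (hιlt i hi))).div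
              (hπmeas ι i (hιlt i hi))
          set h : Ω → ℝ := fun ω => g ω / π ι ω with hh
          have hhmeas : Measurable[H ι] h := hgmeas.div (hπSM ι).measurable
          have hhSM : StronglyMeasurable[H ι] h := hhmeas.stronglyMeasurable
          have hhm0 : Measurable h := hhmeas.mono (hH ι) le_rfl
          have hgm0 : Measurable g := hgmeas.mono (hH ι) le_rfl
          -- integrability facts
          have hg_bd : ∀ᵐ ω ∂μ, ‖g ω‖ ≤ (1 / σ) ^ s.card * ‖M ω θ‖ := by
            filter_upwards [hE] with ω hω
            simp only [hg, Real.norm_eq_abs, abs_mul]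
            exact mul_le_mul_of_nonneg_right (hprod_bound s ω hω) (abs_nonneg _)
          have hg_int : Integrable g μ :=
            integ g ((1 / σ) ^ s.card) hgm0.aestronglyMeasurable hg_bd
          have hh_bd : ∀ᵐ ω ∂μ, ‖h ω‖ ≤ (1 / σ) ^ s.card * (1 / σ) * ‖M ω θ‖ := by
            filter_upwards [hE, hg_bd] with ω hω hgb
            have hπb : σ ≤ |π ι ω| := le_trans (hω ι) (le_abs_self _)
            simp only [hh, Real.norm_eq_abs] at *
            calc |g ω / π ι ω| = |g ω| / |π ι ω| := abs_div _ _
              _ ≤ ((1 / σ) ^ s.card * |M ω θ|) / σ := by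
                  exact div_le_div₀ (by positivity) hgb hσ0 hπb
              _ = (1 / σ) ^ s.card * (1 / σ) * |M ω θ| := by ring
          have hh_int : Integrable h μ :=
            integ h ((1 / σ) ^ s.card * (1 / σ)) hhm0.aestronglyMeasurable hh_bd
          have hhind_int : Integrable (h * (A ι).indicator (fun _ => (1 : ℝ))) μ := by
            refine integ _ ((1 / σ) ^ s.card * (1 / σ))
              (hhm0.mul (measurable_const.indicator (hA ι))).aestronglyMeasurable ?_
            filter_upwards [hh_bd] with ω hb
            simp only [Pi.mul_apply, Real.norm_eq_abs, abs_mul] at *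
            calc |h ω| * |(A ι).indicator (fun _ => (1 : ℝ)) ω| ≤ |h ω| * 1 :=
                  mul_le_mul_of_nonneg_left (hind ι ω) (abs_nonneg _)
              _ = |h ω| := mul_one _
              _ ≤ _ := hb
          have hind_int : Integrable ((A ι).indicator (fun _ => (1 : ℝ))) μ :=
            (integrable_const (1 : ℝ)).indicator (hA ι)
          -- main computation
          rw [hinsert]
          calc ∫ ω, (∏ i ∈ insert ι s, r i ω) * M ω θ ∂μ
              = ∫ ω, h ω * (A ι).indicator (fun _ => (1 : ℝ)) ω ∂μ := by
                refine integral_congr_ae (Filter.Eventually.of_forall fun ω => ?_)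
                simp only [Finset.prod_insert hιs, hh, hg, hr]
                ring
            _ = ∫ ω, (μ[h * (A ι).indicator (fun _ => (1 : ℝ)) | H ι]) ω ∂μ :=
                (integral_condExp (hH ι)).symm
            _ = ∫ ω, h ω * (μ[(A ι).indicator (fun _ => (1 : ℝ)) | H ι]) ω ∂μ := by
                refine integral_congr_ae ?_
                filter_upwards [condExp_mul_of_stronglyMeasurable_left hhSM hhind_int hind_int]
                  with ω hω
                simpa using hω
            _ = ∫ ω, h ω * π ι ω ∂μ := by simp_rw [← hπ ι]
            _ = ∫ ω, g ω ∂μ := by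
                refine integral_congr_ae ?_
                filter_upwards [hE] with ω hω
                have hne : π ι ω ≠ 0 := ne_of_gt (lt_of_lt_of_le hσ0 (hω ι))
                simp only [hh]
                exact div_mul_cancel₀ (g ω) hne
            _ = ∫ ω, M ω θ ∂μ := ih
    have huniv : Finset.univ.filter (fun i : Fin m => m - m ≤ (i : ℕ)) = Finset.univ := by
      simp
    have := main m
    rw [huniv] at this
    simpa [hr] using this
  refine ⟨key, fun θ0 ⟨h1, h2⟩ => ⟨by rw [key θ0]; exact h1, fun θ hθ => h2 θ ?_⟩⟩
  rw [← key θ]; exact hθ
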